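/- arXiv:2401.13971 — 2 statements merged into one kernel-verified Lean document; each statement's English description precedes it below -/
import Mathlib

section
/- Tail bound for convex stochastic optimization under generalized Lipschitz continuity: Run x^{k+1} = argmin_x { f_{x^k}(x,ξ^k) + ω(x) + (γ_k/2)‖x − x^k‖² } with i.i.d. samples ξ^k ∼ Ξ and γ_k = α(𝒢(‖x^k‖) + 1)√K, α > 0. Then for any optimal solution x* of min ψ, every a > 0, and every 2 ≤ k ≤ K, P{ ‖x^k − x*‖ ≥ 2(L_f + L_ω)/(α√K) + a } ≤ 2Δ/a, where Δ = ‖x¹ − x*‖ + (L_f + L_ω)/α. -/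
open MeasureTheory

/-- Norm identity for convex combinations in a real inner product space. -/
lemma aux_norm_combo {E : Type*} [NormedAddCommGroup E] [InnerProductSpace ℝ E]
    (u v : E) (t : ℝ) :
    ‖(1-t) • u + t • v‖^2 = (1-t)*‖u‖^2 + t*‖v‖^2 - t*(1-t)*‖u-v‖^2 := by
  have h1 := norm_add_sq_real ((1-t) • u) (t • v)
  have h2 := norm_sub_sq_real u v
  have e1 : ‖(1-t) • u‖^2 = (1-t)^2 * ‖u‖^2 := by
    rw [norm_smul]; simp [Real.norm_eq_abs, mul_pow, sq_abs]
  have e2 : ‖t • v‖^2 = t^2 * ‖v‖^2 := by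
    rw [norm_smul]; simp [Real.norm_eq_abs, mul_pow, sq_abs]
  rw [h1, e1, e2, real_inner_smul_left, real_inner_smul_right, h2]
  ring

/-- Variance trick: for a nonnegative function on a probability space with integrable
square, the function is integrable and its mean squared is at most the second moment. -/
lemma aux_first_moment {T : Type*} [MeasurableSpace T] (ν : Measure T) [IsProbabilityMeasure ν]
    (h : T → ℝ) (hnn : ∀ t, 0 ≤ h t) (hmeas : AEStronglyMeasurable h ν)
    (hint2 : Integrable (fun t => h t ^ 2) ν) :
    Integrable h ν ∧ (∫ t, h t ∂ν) ^ 2 ≤ ∫ t, h t ^ 2 ∂ν := by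
  have hint1 : Integrable h ν := by
    refine Integrable.mono' ((integrable_const 1).add hint2) hmeas (Filter.Eventually.of_forall ?_)
    intro t
    rw [Real.norm_eq_abs, abs_of_nonneg (hnn t)]
    simp only [Pi.add_apply]
    nlinarith [sq_nonneg (h t - 1)]
  refine ⟨hint1, ?_⟩
  set m := ∫ t, h t ∂ν with hm
  have e : ∫ t, (h t - m)^2 ∂ν = (∫ t, h t ^ 2 ∂ν) - m^2 := by
    have hfe : (fun t => (h t - m)^2) = fun t => (h t^2 - (2*m) * h t) + m^2 := by
      funext t; ring
    have i1 : Integrable (fun t => h t^2 - 2*m*h t) ν := hint2.sub (hint1.const_mul (2*m))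
    rw [hfe, integral_add i1 (integrable_const _),
      integral_sub hint2 (hint1.const_mul _), MeasureTheory.integral_const_mul, integral_const]
    simp [measure_univ]
    ring
  have hv : 0 ≤ ∫ t, (h t - m)^2 ∂ν := integral_nonneg fun t => sq_nonneg _
  rw [e] at hv
  linarith

/-- One-step inequality for the stochastic proximal model step. -/
lemma aux_step {E : Type*} [NormedAddCommGroup E] [InnerProductSpace ℝ E]
    {S : Type*} [MeasurableSpace S] (μ : Measure S) [IsProbabilityMeasure μ]
    (Φ : E → S → ℝ) (x xstar : E) (γ : ℝ) (hγ : 0 < γ)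
    (ℓ : S → ℝ) (hℓ : ∀ s, 0 ≤ ℓ s)
    (hΦconv : ∀ s, ConvexOn ℝ Set.univ (fun y => Φ y s))
    (hΦlip : ∀ s (y z : E), Φ y s - Φ z s ≤ ℓ s * ‖y - z‖)
    (hΦint : ∀ y, Integrable (fun s => Φ y s) μ)
    (hΦmean : ∫ s, Φ xstar s ∂μ ≤ ∫ s, Φ x s ∂μ)
    (hℓint : Integrable (fun s => ℓ s ^ 2) μ)
    (Xp : S → E) (hXpm : Measurable (fun s => ‖Xp s - xstar‖))
    (hupd : ∀ s (y : E), Φ (Xp s) s + γ / 2 * ‖Xp s - x‖ ^ 2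
      ≤ Φ y s + γ / 2 * ‖y - x‖ ^ 2) :
    ∫⁻ s, ENNReal.ofReal (‖Xp s - xstar‖ ^ 2) ∂μ
      ≤ ENNReal.ofReal (‖x - xstar‖ ^ 2 + (∫ s, ℓ s ^ 2 ∂μ) / γ ^ 2) := by
  -- strong-minimality inequality
  have hstrong : ∀ s (y : E), Φ (Xp s) s + γ/2 * ‖Xp s - x‖^2 + γ/2 * ‖y - Xp s‖^2
      ≤ Φ y s + γ/2 * ‖y - x‖^2 := by
    intro s y
    have H : ∀ t : ℝ, 0 < t → t ≤ 1 →
        Φ (Xp s) s + γ/2 * ‖Xp s - x‖^2 + γ/2 * (1-t) * ‖y - Xp s‖^2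
          ≤ Φ y s + γ/2 * ‖y - x‖^2 := by
      intro t ht ht1
      have h1 := hupd s ((1-t) • Xp s + t • y)
      have h2 : Φ ((1-t) • Xp s + t • y) s ≤ (1-t) * Φ (Xp s) s + t * Φ y s :=
        (hΦconv s).2 (Set.mem_univ _) (Set.mem_univ _) (by linarith) (le_of_lt ht) (by ring)
      have hco : (1-t) • Xp s + t • y - x = (1-t) • (Xp s - x) + t • (y - x) := by
        module
      have h3 : ‖(1-t) • Xp s + t • y - x‖^2
          = (1-t)*‖Xp s - x‖^2 + t*‖y - x‖^2 - t*(1-t)*‖(Xp s - x) - (y - x)‖^2 := by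
        rw [hco]; exact aux_norm_combo _ _ t
      have h4 : (Xp s - x) - (y - x) = Xp s - y := by abel
      have h5 : ‖Xp s - y‖ = ‖y - Xp s‖ := norm_sub_rev _ _
      rw [h4, h5] at h3
      have h6 : t * (Φ (Xp s) s + γ/2 * ‖Xp s - x‖^2 + γ/2 * (1-t) * ‖y - Xp s‖^2)
          ≤ t * (Φ y s + γ/2 * ‖y - x‖^2) := by nlinarith [h1, h2, h3]
      exact le_of_mul_le_mul_left h6 ht
    refine le_of_forall_pos_le_add ?_
    intro ε hε
    set C := ‖y - Xp s‖^2 with hC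
    have hC0 : 0 ≤ C := sq_nonneg _
    have hd : (0:ℝ) < γ/2*C + 1 := by positivity
    set t := min 1 (ε / (γ/2*C + 1)) with htdef
    have ht : 0 < t := lt_min one_pos (div_pos hε hd)
    have ht1 : t ≤ 1 := min_le_left _ _
    have h5 := H t ht ht1
    have h6 : γ/2*t*C ≤ ε := by
      calc γ/2*t*C ≤ t * (γ/2*C + 1) := by nlinarith
        _ ≤ (ε/(γ/2*C + 1)) * (γ/2*C + 1) :=
            mul_le_mul_of_nonneg_right (min_le_right _ _) hd.le
        _ = ε := div_mul_cancel₀ _ hd.ne'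
    have h7 : γ/2*C - γ/2*(1-t)*C = γ/2*t*C := by ring
    linarith
  -- pathwise step-size bound
  have hsz : ∀ s, ‖Xp s - x‖ ≤ 2 * ℓ s / γ := by
    intro s
    have h1 := hupd s x
    rw [sub_self, norm_zero] at h1
    have h2 := hΦlip s x (Xp s)
    have h3 : ‖x - Xp s‖ = ‖Xp s - x‖ := norm_sub_rev _ _
    rw [h3] at h2
    have hd0 : 0 ≤ ‖Xp s - x‖ := norm_nonneg _
    rcases eq_or_lt_of_le hd0 with h|h
    · rw [← h]
      exact div_nonneg (by nlinarith [hℓ s]) hγ.le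
    · rw [le_div_iff₀ hγ]
      nlinarith
  -- key pointwise inequality
  have key : ∀ s, ‖Xp s - xstar‖^2
      ≤ ‖x - xstar‖^2 + (2/γ) * (Φ xstar s - Φ x s) + ℓ s^2/γ^2 := by
    intro s
    have h1 := hstrong s xstar
    have h2 := hΦlip s x (Xp s)
    have h3 : ‖x - Xp s‖ = ‖Xp s - x‖ := norm_sub_rev _ _
    rw [h3] at h2
    have h4 : ‖xstar - Xp s‖ = ‖Xp s - xstar‖ := norm_sub_rev _ _
    rw [h4] at h1
    have hyoung : ℓ s * ‖Xp s - x‖ - γ/2 * ‖Xp s - x‖^2 ≤ ℓ s^2/(2*γ) := by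
      rw [le_div_iff₀ (by positivity : (0:ℝ) < 2*γ)]
      nlinarith [sq_nonneg (γ * ‖Xp s - x‖ - ℓ s)]
    have h7 : γ/2 * ‖Xp s - xstar‖^2
        ≤ γ/2 * ‖xstar - x‖^2 + (Φ xstar s - Φ x s) + ℓ s^2/(2*γ) := by linarith
    have h8 : ‖xstar - x‖ = ‖x - xstar‖ := norm_sub_rev _ _
    rw [h8] at h7
    have h9 := mul_le_mul_of_nonneg_left h7 (le_of_lt (div_pos two_pos hγ))
    have h10 : (2/γ) * (γ/2 * ‖Xp s - xstar‖^2) = ‖Xp s - xstar‖^2 := by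
      field_simp
    rw [h10] at h9
    calc ‖Xp s - xstar‖^2
        ≤ (2/γ) * (γ/2 * ‖x - xstar‖^2 + (Φ xstar s - Φ x s) + ℓ s^2/(2*γ)) := h9
      _ = ‖x - xstar‖^2 + (2/γ) * (Φ xstar s - Φ x s) + ℓ s^2/γ^2 := by
          field_simp
  -- integrability of the squared distance
  have hCmeas : Measurable (fun s => ‖Xp s - xstar‖^2) := hXpm.pow_const 2
  have hdom : ∀ s, ‖Xp s - xstar‖^2 ≤ 2*‖x - xstar‖^2 + (8/γ^2) * ℓ s^2 := by
    intro s
    have htri : ‖Xp s - xstar‖ ≤ ‖Xp s - x‖ + ‖x - xstar‖ :=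
      norm_sub_le_norm_sub_add_norm_sub _ _ _
    have hsz' := hsz s
    have he : (2*ℓ s/γ)^2 = (4/γ^2) * ℓ s^2 := by field_simp; ring
    have h1 : ‖Xp s - xstar‖^2 ≤ (‖Xp s - x‖ + ‖x - xstar‖)^2 := by
      nlinarith [norm_nonneg (Xp s - xstar), norm_nonneg (Xp s - x), norm_nonneg (x - xstar)]
    have h2 : ‖Xp s - x‖^2 ≤ (2*ℓ s/γ)^2 := by
      nlinarith [norm_nonneg (Xp s - x), div_nonneg (by nlinarith [hℓ s] : (0:ℝ) ≤ 2*ℓ s) hγ.le]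
    have he2 : (8:ℝ)/γ^2 * ℓ s^2 = 2*((4:ℝ)/γ^2 * ℓ s^2) := by ring
    nlinarith [sq_nonneg (‖Xp s - x‖ - ‖x - xstar‖), he, h1, h2, he2]
  have hCint : Integrable (fun s => ‖Xp s - xstar‖^2) μ := by
    refine Integrable.mono' ((integrable_const (2*‖x - xstar‖^2)).add (hℓint.const_mul (8/γ^2)))
      hCmeas.aestronglyMeasurable (Filter.Eventually.of_forall ?_)
    intro s
    rw [Real.norm_eq_abs, abs_of_nonneg (sq_nonneg _)]
    exact hdom s
  -- integrate
  have hRint : Integrable (fun s => ‖x - xstar‖^2 + (2/γ) * (Φ xstar s - Φ x s) + ℓ s^2/γ^2) μ := by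
    refine Integrable.add (Integrable.add (integrable_const _) ?_) (hℓint.div_const _)
    exact ((hΦint xstar).sub (hΦint x)).const_mul (2/γ)
  have hint : ∫ s, ‖Xp s - xstar‖^2 ∂μ
      ≤ ‖x - xstar‖^2 + (∫ s, ℓ s ^ 2 ∂μ)/γ^2 := by
    have h1 : ∫ s, ‖Xp s - xstar‖^2 ∂μ
        ≤ ∫ s, (‖x - xstar‖^2 + (2/γ) * (Φ xstar s - Φ x s) + ℓ s^2/γ^2) ∂μ :=
      integral_mono hCint hRint key
    have i1 : Integrable (fun s => ‖x - xstar‖^2 + (2/γ) * (Φ xstar s - Φ x s)) μ :=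
      (integrable_const _).add (((hΦint xstar).sub (hΦint x)).const_mul (2/γ))
    have i2 : Integrable (fun s => (2/γ) * (Φ xstar s - Φ x s)) μ :=
      ((hΦint xstar).sub (hΦint x)).const_mul (2/γ)
    have h2 : ∫ s, (‖x - xstar‖^2 + (2/γ) * (Φ xstar s - Φ x s) + ℓ s^2/γ^2) ∂μ
        = ‖x - xstar‖^2 + (2/γ) * ((∫ s, Φ xstar s ∂μ) - ∫ s, Φ x s ∂μ)
          + (∫ s, ℓ s ^ 2 ∂μ)/γ^2 := by
      rw [integral_add i1 (hℓint.div_const _), integral_add (integrable_const _) i2,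
        MeasureTheory.integral_const_mul, integral_sub (hΦint xstar) (hΦint x),
        integral_div, integral_const]
      simp [measure_univ]
    have h3 : (2/γ) * ((∫ s, Φ xstar s ∂μ) - ∫ s, Φ x s ∂μ) ≤ 0 :=
      mul_nonpos_of_nonneg_of_nonpos (by positivity) (by linarith)
    rw [h2] at h1
    linarith
  calc ∫⁻ s, ENNReal.ofReal (‖Xp s - xstar‖ ^ 2) ∂μ
      = ENNReal.ofReal (∫ s, ‖Xp s - xstar‖^2 ∂μ) :=
        (ofReal_integral_eq_lintegral_ofReal hCint
          (Filter.Eventually.of_forall fun s => sq_nonneg _)).symm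
    _ ≤ _ := ENNReal.ofReal_le_ofReal hint

set_option maxHeartbeats 1600000

open MeasureTheory

/-- **Lemma D.3** (tail bound for convex stochastic optimization under generalized
Lipschitz continuity).  The algorithm is run for `K` steps on the product space
`Fin K → S` with the i.i.d. product measure, with adaptive stepsize
`γ_k = α(𝒢(‖x^k‖)+1)√K`.  Then for every `a > 0` and every `2 ≤ k ≤ K`,
`P{‖x^k - x*‖ ≥ 2(L_f+L_ω)/(α√K) + a} ≤ 2Δ/a`, where `Δ = ‖x¹-x*‖ + (L_f+L_ω)/α`. -/
theorem convex_tail_bound_generalized_lipschitz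
    {n : ℕ} {S : Type*} [MeasurableSpace S] (μ : Measure S) [IsProbabilityMeasure μ]
    (f w ψ : EuclideanSpace ℝ (Fin n) → ℝ)
    (fmod : EuclideanSpace ℝ (Fin n) → EuclideanSpace ℝ (Fin n) → S → ℝ)
    (Lfs : S → ℝ) (G : ℝ → ℝ) (Lf Lw α : ℝ)
    -- basic parameter assumptions
    (hα : 0 < α) (hLf : 0 ≤ Lf) (hLw : 0 ≤ Lw)
    -- convex composite objective
    (hψdef : ∀ x, ψ x = f x + w x)
    (hf_conv : ConvexOn ℝ Set.univ f)
    (hw_conv : ConvexOn ℝ Set.univ w)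
    (hw_lip : ∀ x y, |w x - w y| ≤ Lw * ‖x - y‖)
    -- properties of the stochastic model (with τ = 0)
    (hmodel_conv : ∀ x s, ConvexOn ℝ Set.univ (fun y => fmod x y s))
    (hmodel_int : ∀ x y, Integrable (fun s => fmod x y s) μ)
    (hmodel_center : ∀ x, ∫ s, fmod x x s ∂μ = f x)
    (hmodel_under : ∀ x y, ∫ s, fmod x y s ∂μ ≤ f y)
    -- C1: generalized Lipschitz continuity with growth function 𝒢
    (hG_nonneg : ∀ t, 0 ≤ G t) (hG_mono : Monotone G) (hG_cont : Continuous G)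
    (hC1 : ∀ x y z s, fmod x y s - fmod x z s ≤ Lfs s * G ‖x‖ * ‖y - z‖)
    (hLfs_nonneg : ∀ s, 0 ≤ Lfs s)
    (hLfs_int : Integrable (fun s => Lfs s ^ 2) μ)
    (hLfs_bound : ∫ s, Lfs s ^ 2 ∂μ ≤ Lf ^ 2)
    -- an optimal solution
    (xstar : EuclideanSpace ℝ (Fin n)) (hxstar : ∀ y, ψ xstar ≤ ψ y)
    -- the algorithm with adaptive stepsize `γ_k = α(𝒢(‖x^k‖)+1)√K`
    (K : ℕ) (hK : 1 ≤ K)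
    (X : ℕ → (Fin K → S) → EuclideanSpace ℝ (Fin n))
    (x1 : EuclideanSpace ℝ (Fin n)) (hX0 : ∀ ω, X 0 ω = x1)
    (hXmeas : ∀ k, Measurable (X k))
    (hXadapt : ∀ k, ∀ ω ω' : Fin K → S,
      (∀ i : Fin K, (i : ℕ) < k → ω i = ω' i) → X k ω = X k ω')
    (hupdate : ∀ k (hk : k < K) (ω : Fin K → S) (y : EuclideanSpace ℝ (Fin n)),
      fmod (X k ω) (X (k + 1) ω) (ω ⟨k, hk⟩) + w (X (k + 1) ω)
          + α * (G ‖X k ω‖ + 1) * Real.sqrt K / 2 * ‖X (k + 1) ω - X k ω‖ ^ 2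
        ≤ fmod (X k ω) y (ω ⟨k, hk⟩) + w y
          + α * (G ‖X k ω‖ + 1) * Real.sqrt K / 2 * ‖y - X k ω‖ ^ 2)
    (hdint : ∀ k, Integrable (fun ω => ‖X k ω - xstar‖ ^ 2)
      (Measure.pi fun _ : Fin K => μ)) :
    ∀ a : ℝ, 0 < a → ∀ k : ℕ, 1 ≤ k → k < K →
      (Measure.pi fun _ : Fin K => μ)
          {ω | 2 * (Lf + Lw) / (α * Real.sqrt K) + a ≤ ‖X k ω - xstar‖}
        ≤ ENNReal.ofReal (2 * (‖x1 - xstar‖ + (Lf + Lw) / α) / a) := by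
  intro a ha k hk1 hkK
  set π : Measure (Fin K → S) := Measure.pi fun _ : Fin K => μ with hπ
  have hK0 : (0:ℝ) < K := by exact_mod_cast hK
  have hsK : 0 < Real.sqrt K := Real.sqrt_pos.mpr hK0
  set L : ℝ := Lf + Lw with hLdef
  have hL : 0 ≤ L := by positivity
  set c : ℝ := L^2/(α^2*K) with hcdef
  have hc : 0 ≤ c := by positivity
  set B0 : ℝ := ‖x1 - xstar‖^2 with hB0
  -- first moment of Lfs
  have hLfsmeas : AEStronglyMeasurable Lfs μ := by
    have hfe : (fun s => Real.sqrt (Lfs s^2)) = Lfs :=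
      funext fun s => Real.sqrt_sq (hLfs_nonneg s)
    rw [← hfe]
    exact Real.continuous_sqrt.comp_aestronglyMeasurable hLfs_int.1
  obtain ⟨hLfs1, hLfsm2⟩ := aux_first_moment μ Lfs hLfs_nonneg hLfsmeas hLfs_int
  have hLfsmean : ∫ s, Lfs s ∂μ ≤ Lf := by
    have h0 : 0 ≤ ∫ s, Lfs s ∂μ := integral_nonneg hLfs_nonneg
    nlinarith [hLfsm2, hLfs_bound]
  -- the Lyapunov functions
  set F : ℕ → (Fin K → S) → ENNReal := fun j ω => ENNReal.ofReal (‖X j ω - xstar‖^2) with hF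
  have hFmeas : ∀ j, Measurable (F j) := fun j =>
    ENNReal.measurable_ofReal.comp ((((hXmeas j).sub measurable_const).norm).pow_const 2)
  -- one-step recursion
  have hrec : ∀ j, j < K → ∫⁻ ω, F (j+1) ω ∂π ≤ (∫⁻ ω, F j ω ∂π) + ENNReal.ofReal c := by
    intro j hj
    have hg : Measurable (fun ω => F j ω + ENNReal.ofReal c) := (hFmeas j).add measurable_const
    have hmain : ∫⁻ ω, F (j+1) ω ∂π ≤ ∫⁻ ω, (F j ω + ENNReal.ofReal c) ∂π := by
      refine lintegral_le_of_lmarginal_le {(⟨j, hj⟩ : Fin K)} (hFmeas (j+1)) hg ?_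
      rw [lmarginal_singleton, lmarginal_singleton, Pi.le_def]
      intro ω
      have hXj : ∀ s : S, X j (Function.update ω ⟨j, hj⟩ s) = X j ω := by
        intro s
        refine (hXadapt j ω (Function.update ω ⟨j, hj⟩ s) ?_).symm
        intro i' hi'
        have hne : i' ≠ (⟨j, hj⟩ : Fin K) := by
          intro h
          rw [h] at hi'
          exact lt_irrefl j hi'
        exact (Function.update_of_ne hne s ω).symm
      -- apply the one-step lemma
      set x : EuclideanSpace ℝ (Fin n) := X j ω with hx
      set γ : ℝ := α * (G ‖x‖ + 1) * Real.sqrt K with hγdef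
      have hγ : 0 < γ := by
        have := hG_nonneg ‖x‖
        rw [hγdef]; positivity
      have hstep := aux_step (E := EuclideanSpace ℝ (Fin n)) μ
        (fun y s => fmod x y s + w y) x xstar γ hγ
        (fun s => Lfs s * G ‖x‖ + Lw) (fun s => by nlinarith [mul_nonneg (hLfs_nonneg s) (hG_nonneg ‖x‖), hLw])
        (fun s => (hmodel_conv x s).add hw_conv)
        (fun s y z => by
          have h1 := hC1 x y z s
          have h2 : w y - w z ≤ Lw * ‖y - z‖ := le_trans (le_abs_self _) (hw_lip y z)
          have hr : (Lfs s * G ‖x‖ + Lw) * ‖y - z‖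
              = Lfs s * G ‖x‖ * ‖y - z‖ + Lw * ‖y - z‖ := by ring
          linarith)
        (fun y => (hmodel_int x y).add (integrable_const _))
        (by
          rw [integral_add (hmodel_int x xstar) (integrable_const _),
            integral_add (hmodel_int x x) (integrable_const _), integral_const, integral_const]
          simp only [measure_univ, ENNReal.toReal_one, probReal_univ, smul_eq_mul, one_mul]
          have hopt := hxstar x
          rw [hψdef, hψdef] at hopt
          have h1 := hmodel_under x xstar
          have h2 := hmodel_center x
          linarith)
        (by
          have hfe : (fun s => (Lfs s * G ‖x‖ + Lw)^2)
              = fun s => (G ‖x‖)^2 * Lfs s^2 + (2*(G ‖x‖)*Lw)*(Lfs s) + Lw^2 :=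
            funext fun s => by ring
          rw [hfe]
          exact ((hLfs_int.const_mul _).add (hLfs1.const_mul _)).add (integrable_const _))
        (fun s => X (j+1) (Function.update ω ⟨j, hj⟩ s))
        ((((hXmeas (j+1)).comp (measurable_update ω)).sub measurable_const).norm)
        (fun s y => by
          have h := hupdate j hj (Function.update ω ⟨j, hj⟩ s) y
          rw [Function.update_self, hXj s] at h
          exact h)
      -- bound the error term
      set Q : ℝ := ∫ s, (Lfs s * G ‖x‖ + Lw)^2 ∂μ with hQdef
      have hQ : Q = (G ‖x‖)^2 * (∫ s, Lfs s^2 ∂μ) + (2*(G ‖x‖)*Lw)*(∫ s, Lfs s ∂μ) + Lw^2 := by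
        rw [hQdef]
        have hfe : (fun s => (Lfs s * G ‖x‖ + Lw)^2)
            = fun s => ((G ‖x‖)^2 * Lfs s^2 + (2*(G ‖x‖)*Lw)*(Lfs s)) + Lw^2 :=
          funext fun s => by ring
        have i3 : Integrable (fun s => (G ‖x‖)^2 * Lfs s^2 + (2*(G ‖x‖)*Lw)*(Lfs s)) μ :=
          (hLfs_int.const_mul _).add (hLfs1.const_mul _)
        rw [hfe, integral_add i3 (integrable_const _),
          integral_add (hLfs_int.const_mul _) (hLfs1.const_mul _),
          MeasureTheory.integral_const_mul, MeasureTheory.integral_const_mul, integral_const]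
        simp [measure_univ]
      have q1 : Q ≤ (G ‖x‖ * Lf + Lw)^2 := by
        have h1 : (G ‖x‖)^2 * (∫ s, Lfs s^2 ∂μ) ≤ (G ‖x‖)^2 * Lf^2 :=
          mul_le_mul_of_nonneg_left hLfs_bound (sq_nonneg _)
        have h2 : (2*(G ‖x‖)*Lw)*(∫ s, Lfs s ∂μ) ≤ (2*(G ‖x‖)*Lw)*Lf :=
          mul_le_mul_of_nonneg_left hLfsmean (by nlinarith [hG_nonneg ‖x‖])
        rw [hQ]; nlinarith
      have q2 : (G ‖x‖ * Lf + Lw)^2 ≤ ((G ‖x‖ + 1) * L)^2 := by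
        refine pow_le_pow_left₀ (by nlinarith [hG_nonneg ‖x‖]) ?_ 2
        rw [hLdef]; nlinarith [hG_nonneg ‖x‖]
      have hγsq : γ^2 = α^2 * (G ‖x‖ + 1)^2 * K := by
        rw [hγdef, mul_pow, mul_pow, Real.sq_sqrt hK0.le]
      have hQc : Q/γ^2 ≤ c := by
        rw [div_le_iff₀ (by positivity : (0:ℝ) < γ^2)]
        have he : c * γ^2 = ((G ‖x‖ + 1) * L)^2 := by
          rw [hγsq, hcdef]
          field_simp
        rw [he]
        linarith
      -- conclude the pointwise lintegral inequality
      have hRHS : ∫⁻ s, (F j (Function.update ω ⟨j, hj⟩ s) + ENNReal.ofReal c) ∂μ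
          = F j ω + ENNReal.ofReal c := by
        simp only [hF, hXj]
        rw [lintegral_const, measure_univ, mul_one]
      calc ∫⁻ s, F (j+1) (Function.update ω ⟨j, hj⟩ s) ∂μ
          ≤ ENNReal.ofReal (‖x - xstar‖^2 + Q/γ^2) := hstep
        _ ≤ ENNReal.ofReal (‖x - xstar‖^2) + ENNReal.ofReal (Q/γ^2) := ENNReal.ofReal_add_le
        _ ≤ F j ω + ENNReal.ofReal c := add_le_add le_rfl (ENNReal.ofReal_le_ofReal hQc)
        _ = ∫⁻ s, (F j (Function.update ω ⟨j, hj⟩ s) + ENNReal.ofReal c) ∂μ := hRHS.symm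
    calc ∫⁻ ω, F (j+1) ω ∂π ≤ ∫⁻ ω, (F j ω + ENNReal.ofReal c) ∂π := hmain
      _ = (∫⁻ ω, F j ω ∂π) + ENNReal.ofReal c := by
          rw [lintegral_add_right _ measurable_const, lintegral_const, measure_univ, mul_one]
  -- iterate the recursion
  have hiter : ∀ j, j ≤ K → ∫⁻ ω, F j ω ∂π ≤ ENNReal.ofReal B0 + j * ENNReal.ofReal c := by
    intro j
    induction j with
    | zero =>
      intro _
      simp only [hF, hX0]
      rw [lintegral_const, measure_univ, mul_one]
      simp [hB0]
    | succ j ih =>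
      intro hjK
      have hj : j < K := Nat.lt_of_succ_le hjK
      calc ∫⁻ ω, F (j+1) ω ∂π ≤ (∫⁻ ω, F j ω ∂π) + ENNReal.ofReal c := hrec j hj
        _ ≤ ENNReal.ofReal B0 + j * ENNReal.ofReal c + ENNReal.ofReal c :=
            add_le_add_left (ih hj.le) _
        _ = ENNReal.ofReal B0 + (j+1 : ℕ) * ENNReal.ofReal c := by
            rw [Nat.cast_succ, add_mul, one_mul, add_assoc]
  -- second moment bound
  have hsecond : ∫⁻ ω, F k ω ∂π ≤ ENNReal.ofReal (B0 + L^2/α^2) := by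
    calc ∫⁻ ω, F k ω ∂π ≤ ENNReal.ofReal B0 + k * ENNReal.ofReal c := hiter k hkK.le
      _ ≤ ENNReal.ofReal B0 + K * ENNReal.ofReal c := by
          exact add_le_add_right (mul_le_mul_left (by exact_mod_cast hkK.le) _) _
      _ = ENNReal.ofReal B0 + ENNReal.ofReal ((K:ℝ) * c) := by
          rw [← ENNReal.ofReal_natCast K, ← ENNReal.ofReal_mul (Nat.cast_nonneg K)]
      _ = ENNReal.ofReal (B0 + (K:ℝ) * c) := by
          rw [ENNReal.ofReal_add (sq_nonneg _) (by positivity)]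
      _ = ENNReal.ofReal (B0 + L^2/α^2) := by
          congr 1
          rw [hcdef]
          field_simp
  -- first moment bound via Cauchy-Schwarz
  have hYmeas : Measurable (fun ω => ‖X k ω - xstar‖) :=
    ((hXmeas k).sub measurable_const).norm
  have hYint2 : Integrable (fun ω => ‖X k ω - xstar‖^2) π := hdint k
  obtain ⟨hYint, hYsq⟩ := aux_first_moment π (fun ω => ‖X k ω - xstar‖)
    (fun ω => norm_nonneg _) hYmeas.aestronglyMeasurable hYint2
  have hY2 : ∫ ω, ‖X k ω - xstar‖^2 ∂π ≤ B0 + L^2/α^2 := by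
    have he : ENNReal.ofReal (∫ ω, ‖X k ω - xstar‖^2 ∂π) = ∫⁻ ω, F k ω ∂π :=
      ofReal_integral_eq_lintegral_ofReal hYint2 (Filter.Eventually.of_forall fun ω => sq_nonneg _)
    have := he ▸ hsecond
    exact (ENNReal.ofReal_le_ofReal_iff (by positivity)).mp this
  have hmean : ∫ ω, ‖X k ω - xstar‖ ∂π ≤ ‖x1 - xstar‖ + L/α := by
    have h0 : 0 ≤ ∫ ω, ‖X k ω - xstar‖ ∂π := integral_nonneg fun ω => norm_nonneg _
    have hD : 0 ≤ ‖x1 - xstar‖ + L/α := by positivity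
    have he : L^2/α^2 = (L/α)^2 := by rw [div_pow]
    nlinarith [hYsq, hY2, norm_nonneg (x1 - xstar), div_nonneg hL hα.le]
  -- Markov's inequality
  have hsub : {ω | 2 * (Lf + Lw) / (α * Real.sqrt K) + a ≤ ‖X k ω - xstar‖}
      ⊆ {ω | ENNReal.ofReal a ≤ ENNReal.ofReal ‖X k ω - xstar‖} := by
    intro ω hω
    simp only [Set.mem_setOf_eq] at *
    refine ENNReal.ofReal_le_ofReal (le_trans ?_ hω)
    have : 0 ≤ 2 * (Lf + Lw) / (α * Real.sqrt K) :=
      div_nonneg (by positivity) (mul_pos hα hsK).le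
    linarith
  calc π {ω | 2 * (Lf + Lw) / (α * Real.sqrt K) + a ≤ ‖X k ω - xstar‖}
      ≤ π {ω | ENNReal.ofReal a ≤ ENNReal.ofReal ‖X k ω - xstar‖} := measure_mono hsub
    _ ≤ (∫⁻ ω, ENNReal.ofReal ‖X k ω - xstar‖ ∂π) / ENNReal.ofReal a :=
        meas_ge_le_lintegral_div (ENNReal.measurable_ofReal.comp hYmeas).aemeasurable
          (by simp [ENNReal.ofReal_eq_zero]; linarith) ENNReal.ofReal_ne_top
    _ ≤ ENNReal.ofReal (‖x1 - xstar‖ + L/α) / ENNReal.ofReal a := by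
        refine ENNReal.div_le_div_right ?_ _
        rw [← ofReal_integral_eq_lintegral_ofReal hYint
          (Filter.Eventually.of_forall fun ω => norm_nonneg _)]
        exact ENNReal.ofReal_le_ofReal hmean
    _ = ENNReal.ofReal ((‖x1 - xstar‖ + L/α) / a) := (ENNReal.ofReal_div_of_pos ha).symm
    _ ≤ ENNReal.ofReal (2 * (‖x1 - xstar‖ + (Lf + Lw) / α) / a) := by
        refine ENNReal.ofReal_le_ofReal ?_
        rw [hLdef]
        rw [div_le_div_iff₀ ha ha]
        nlinarith [norm_nonneg (x1 - xstar), div_nonneg hL hα.le, ha]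
end

section
/- One-step contraction for convex stochastic optimization under unknown (sample-dependent) Lipschitz continuity: Let x ∈ ℝⁿ be fixed, let γ > 0 be deterministic (independent of the sample ξ), and let x⁺(ξ) = argmin_y { f_x(y,ξ) + ω(y) + (γ/2)‖y − x‖² } for ξ ∼ Ξ. Then for any optimal solution x* of min ψ, E_ξ[‖x⁺(ξ) − x*‖²] ≤ ‖x − x*‖² − (2/γ)[ψ(x) − ψ(x*)] + E_ξ[ (Lip(x,ξ) + L_ω)²/γ² ]. -/
open MeasureTheory
open scoped RealInnerProductSpace

lemma norm_combo_sq {E : Type*} [NormedAddCommGroup E] [InnerProductSpace ℝ E] (a b : E) (t : ℝ) :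
    ‖(1-t) • a + t • b‖^2 = (1-t)*‖a‖^2 + t*‖b‖^2 - t*(1-t)*‖a-b‖^2 := by
  have h1 : ‖(1-t) • a + t • b‖^2 = ⟪(1-t) • a + t • b, (1-t) • a + t • b⟫ :=
    (real_inner_self_eq_norm_sq _).symm
  have h2 : ‖a‖^2 = ⟪a, a⟫ := (real_inner_self_eq_norm_sq _).symm
  have h3 : ‖b‖^2 = ⟪b, b⟫ := (real_inner_self_eq_norm_sq _).symm
  have h4 : ‖a-b‖^2 = ⟪a-b, a-b⟫ := (real_inner_self_eq_norm_sq _).symm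
  rw [h1,h2,h3,h4]
  simp only [inner_add_left, inner_add_right, inner_sub_left, inner_sub_right,
    real_inner_smul_left, real_inner_smul_right, real_inner_comm a b]
  ring


set_option maxHeartbeats 1000000 in
/-- **Lemma D.4** (one-step contraction for convex stochastic optimization under unknown,
sample-dependent Lipschitz continuity, assumptions D1–D2).  For deterministic `γ > 0`
(independent of the sample) and `x⁺(ξ)` the minimizer of the regularized model at `x`,
`E_ξ[‖x⁺(ξ) - x*‖²] ≤ ‖x - x*‖² - (2/γ)[ψ(x) - ψ(x*)] + E_ξ[(Lip(x,ξ) + L_ω)²/γ²]`. -/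
theorem convex_one_step_unknown_lipschitz
    {n : ℕ} {S : Type*} [MeasurableSpace S] (μ : Measure S) [IsProbabilityMeasure μ]
    (f w ψ : EuclideanSpace ℝ (Fin n) → ℝ)
    (fmod : EuclideanSpace ℝ (Fin n) → EuclideanSpace ℝ (Fin n) → S → ℝ)
    (Lip : EuclideanSpace ℝ (Fin n) → S → ℝ) (γ Lw σ : ℝ)
    -- basic parameter assumptions
    (hγ : 0 < γ) (hLw : 0 ≤ Lw) (hσ : 0 ≤ σ)
    -- convex composite objective
    (hψdef : ∀ x, ψ x = f x + w x)
    (hf_conv : ConvexOn ℝ Set.univ f)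
    (hw_conv : ConvexOn ℝ Set.univ w)
    (hw_lip : ∀ x y, |w x - w y| ≤ Lw * ‖x - y‖)
    -- properties of the stochastic model (with τ = 0)
    (hmodel_conv : ∀ x s, ConvexOn ℝ Set.univ (fun y => fmod x y s))
    (hmodel_int : ∀ x y, Integrable (fun s => fmod x y s) μ)
    (hmodel_center : ∀ x, ∫ s, fmod x x s ∂μ = f x)
    (hmodel_under : ∀ x y, ∫ s, fmod x y s ∂μ ≤ f y)
    -- D1: sample-dependent Lipschitz continuity
    (hLip_nonneg : ∀ x s, 0 ≤ Lip x s)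
    (hLip_meas : ∀ x, Measurable (Lip x))
    (hD1 : ∀ x y z s, fmod x z s - fmod x y s ≤ Lip x s * ‖z - y‖)
    -- D2: reference Lipschitz continuity
    (hLip_sq_int : ∀ x, Integrable (fun s => Lip x s ^ 2) μ)
    (hD2 : ∀ x, ∫ s, ∫ s', |Lip x s - Lip x s'| ^ 2 ∂μ ∂μ ≤ σ ^ 2)
    -- an optimal solution
    (xstar : EuclideanSpace ℝ (Fin n)) (hxstar : ∀ y, ψ xstar ≤ ψ y)
    -- the current point and the stochastic one-step update
    (x : EuclideanSpace ℝ (Fin n)) (xplus : S → EuclideanSpace ℝ (Fin n))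
    (hupdate : ∀ s y,
      fmod x (xplus s) s + w (xplus s) + γ / 2 * ‖xplus s - x‖ ^ 2
        ≤ fmod x y s + w y + γ / 2 * ‖y - x‖ ^ 2)
    (hint : Integrable (fun s => ‖xplus s - xstar‖ ^ 2) μ) :
    ∫ s, ‖xplus s - xstar‖ ^ 2 ∂μ
      ≤ ‖x - xstar‖ ^ 2 - 2 / γ * (ψ x - ψ xstar)
        + ∫ s, (Lip x s + Lw) ^ 2 / γ ^ 2 ∂μ := by
  have hγ' : γ ≠ 0 := ne_of_gt hγ
  -- pointwise bound
  have hpt : ∀ s, ‖xplus s - xstar‖ ^ 2 ≤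
      ‖x - xstar‖ ^ 2 + 2/γ * ((fmod x xstar s + w xstar) - (fmod x x s + w x))
        + (Lip x s + Lw) ^ 2 / γ ^ 2 := by
    intro s
    set u := xplus s with hu
    have hgconv : ConvexOn ℝ Set.univ (fun y => fmod x y s + w y) :=
      (hmodel_conv x s).add hw_conv
    -- strong convexity step for t ∈ (0,1)
    have hstep : ∀ t ∈ Set.Ioo (0:ℝ) 1,
        γ/2*(1-t)*‖u - xstar‖^2 ≤
          (fmod x xstar s + w xstar + γ/2*‖xstar - x‖^2)
            - (fmod x u s + w u + γ/2*‖u - x‖^2) := by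
      intro t ht
      have hconv := hgconv.2 (Set.mem_univ u) (Set.mem_univ xstar)
        (by linarith [ht.2] : (0:ℝ) ≤ 1 - t) (le_of_lt ht.1) (by ring)
      have hzx : (1-t) • u + t • xstar - x = (1-t) • (u - x) + t • (xstar - x) := by
        module
      have hid : ‖(1-t) • u + t • xstar - x‖^2
          = (1-t)*‖u-x‖^2 + t*‖xstar-x‖^2 - t*(1-t)*‖u - xstar‖^2 := by
        rw [hzx, norm_combo_sq]
        rw [sub_sub_sub_cancel_right]
      have hup := hupdate s ((1-t) • u + t • xstar)
      rw [← hu, hid] at hup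
      simp only [smul_eq_mul] at hconv
      have hmul : t * (γ/2*(1-t)*‖u - xstar‖^2)
          ≤ t * ((fmod x xstar s + w xstar + γ/2*‖xstar - x‖^2)
            - (fmod x u s + w u + γ/2*‖u - x‖^2)) := by
        nlinarith [hup, hconv]
      exact (mul_le_mul_iff_right₀ ht.1).1 hmul
    -- pass to the limit t → 0⁺
    have hsc : fmod x u s + w u + γ/2*‖u-x‖^2 + γ/2*‖u - xstar‖^2
        ≤ fmod x xstar s + w xstar + γ/2*‖xstar-x‖^2 := by
      have hT : Filter.Tendsto (fun t:ℝ => γ/2*(1-t)*‖u - xstar‖^2)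
          (nhdsWithin 0 (Set.Ioi 0)) (nhds (γ/2*‖u - xstar‖^2)) := by
        have hc : Continuous (fun t:ℝ => γ/2*(1-t)*‖u - xstar‖^2) := by continuity
        have h0 : Filter.Tendsto (fun t:ℝ => γ/2*(1-t)*‖u - xstar‖^2)
            (nhdsWithin 0 (Set.Ioi 0)) (nhds (γ/2*(1-0)*‖u - xstar‖^2)) :=
          (hc.tendsto 0).mono_left nhdsWithin_le_nhds
        simpa using h0
      have hev : ∀ᶠ t in nhdsWithin (0:ℝ) (Set.Ioi 0),
          γ/2*(1-t)*‖u - xstar‖^2 ≤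
            (fmod x xstar s + w xstar + γ/2*‖xstar - x‖^2)
              - (fmod x u s + w u + γ/2*‖u - x‖^2) := by
        filter_upwards [Ioo_mem_nhdsGT_of_mem (Set.left_mem_Ico.2 one_pos)] with t ht
        exact hstep t ht
      have := le_of_tendsto hT hev
      linarith
    -- Lipschitz bounds
    have hD1' : fmod x x s - fmod x u s ≤ Lip x s * ‖u - x‖ := by
      have := hD1 x u x s
      rwa [norm_sub_rev] at this
    have hwl : w x - w u ≤ Lw * ‖u - x‖ := by
      have h1 := hw_lip x u
      have h2 := le_of_abs_le h1
      rwa [norm_sub_rev] at h2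
    have hquad : (Lip x s + Lw) * ‖u-x‖ - γ/2*‖u-x‖^2 ≤ (Lip x s + Lw)^2/(2*γ) := by
      rw [le_div_iff₀ (by linarith : (0:ℝ) < 2*γ)]
      nlinarith [sq_nonneg (γ*‖u-x‖ - (Lip x s + Lw))]
    have hexp : (Lip x s + Lw)*‖u-x‖ = Lip x s*‖u-x‖ + Lw*‖u-x‖ := by ring
    have hn3 : ‖xstar - x‖ = ‖x - xstar‖ := norm_sub_rev _ _
    rw [hn3] at hsc
    have h1 : γ/2 * ‖u - xstar‖^2 ≤ γ/2*‖x-xstar‖^2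
        + ((fmod x xstar s + w xstar) - (fmod x x s + w x)) + (Lip x s + Lw)^2/(2*γ) := by
      linarith [hsc, hD1', hwl, hquad, hexp]
    calc ‖u - xstar‖^2 = (2/γ) * (γ/2*‖u - xstar‖^2) := by field_simp
      _ ≤ (2/γ) * (γ/2*‖x-xstar‖^2
          + ((fmod x xstar s + w xstar) - (fmod x x s + w x)) + (Lip x s + Lw)^2/(2*γ)) :=
        mul_le_mul_of_nonneg_left h1 (by positivity)
      _ = ‖x - xstar‖ ^ 2 + 2/γ * ((fmod x xstar s + w xstar) - (fmod x x s + w x))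
          + (Lip x s + Lw) ^ 2 / γ ^ 2 := by field_simp
  -- integrability facts
  have hLipInt : Integrable (Lip x) μ := by
    refine Integrable.mono' ((integrable_const (1:ℝ)).add (hLip_sq_int x))
      (hLip_meas x).aestronglyMeasurable (Filter.Eventually.of_forall fun s => ?_)
    rw [Real.norm_eq_abs, abs_of_nonneg (hLip_nonneg x s)]
    simp only [Pi.add_apply]
    nlinarith [sq_nonneg (Lip x s - 1)]
  have hint2 : Integrable (fun s => (Lip x s + Lw)^2/γ^2) μ := by
    have heq : (fun s => (Lip x s + Lw)^2/γ^2)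
        = fun s => (Lip x s^2 + (2*Lw*Lip x s + Lw^2)) * (γ^2)⁻¹ := by
      funext s; field_simp; ring
    rw [heq]
    exact ((hLip_sq_int x).add ((hLipInt.const_mul (2*Lw)).add (integrable_const _))).mul_const _
  have hmid0 : Integrable (fun s => (fmod x xstar s + w xstar) - (fmod x x s + w x)) μ :=
    ((hmodel_int x xstar).add (integrable_const _)).sub ((hmodel_int x x).add (integrable_const _))
  have hmid : Integrable (fun s => 2/γ * ((fmod x xstar s + w xstar) - (fmod x x s + w x))) μ :=
    hmid0.const_mul _
  have hintR : Integrable (fun s => ‖x - xstar‖^2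
      + 2/γ*((fmod x xstar s + w xstar) - (fmod x x s + w x)) + (Lip x s + Lw)^2/γ^2) μ :=
    ((integrable_const _).add hmid).add hint2
  have hmono := integral_mono hint hintR hpt
  -- compute the integral of the RHS
  have hsplit : ∫ s, (‖x - xstar‖^2
      + 2/γ*((fmod x xstar s + w xstar) - (fmod x x s + w x)) + (Lip x s + Lw)^2/γ^2) ∂μ
      = ‖x - xstar‖^2
        + 2/γ*(((∫ s, fmod x xstar s ∂μ) + w xstar) - (f x + w x))
        + ∫ s, (Lip x s + Lw)^2/γ^2 ∂μ := by
    have hA : Integrable (fun s => fmod x xstar s + w xstar) μ :=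
      (hmodel_int x xstar).add (integrable_const _)
    have hB : Integrable (fun s => fmod x x s + w x) μ :=
      (hmodel_int x x).add (integrable_const _)
    have hC : Integrable (fun s => ‖x - xstar‖^2
        + 2/γ*((fmod x xstar s + w xstar) - (fmod x x s + w x))) μ :=
      (integrable_const _).add hmid
    rw [integral_add hC hint2, integral_add (integrable_const _) hmid, integral_const,
      integral_const_mul, integral_sub hA hB,
      integral_add (hmodel_int x xstar) (integrable_const _),
      integral_add (hmodel_int x x) (integrable_const _),
      integral_const, integral_const, hmodel_center x]
    simp only [probReal_univ, one_smul]
  rw [hsplit] at hmono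
  have h3 : 2/γ * (((∫ s, fmod x xstar s ∂μ) + w xstar) - (f x + w x))
      ≤ 2/γ * ((f xstar + w xstar) - (f x + w x)) :=
    mul_le_mul_of_nonneg_left (by linarith [hmodel_under x xstar]) (by positivity)
  have h4 : 2/γ * ((f xstar + w xstar) - (f x + w x)) = -(2/γ * (ψ x - ψ xstar)) := by
    rw [hψdef x, hψdef xstar]; ring
  linarith [hmono, h3, h4.le, h4.ge]
end
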